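/- The fields E(t,x) = cos(ωt)·E⁰(x) and B(t,x) = √(3/2) sin(ωt)·(−sin(πx₁)cos(πx₂)cos(2πx₃), cos(πx₁)sin(πx₂)cos(2πx₃), 0), with E⁰(x) = (cos(πx₁)sin(πx₂)sin(−2πx₃), sin(πx₁)cos(πx₂)sin(−2πx₃), sin(πx₁)sin(πx₂)cos(−2πx₃)) and ω = √6 π/ε, satisfy the rescaled source-free Maxwell equations −ε∂_tE + ∇×B = 0, ε∂_tB + ∇×E = 0, ∇·E = 0, ∇·B = 0 on ℝ³. -/

import Mathlib

open scoped BigOperators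

noncomputable section

abbrev V3 := EuclideanSpace ℝ (Fin 3)

/-- partial derivative in direction `i` -/
def pd (i : Fin 3) (f : V3 → ℝ) (x : V3) : ℝ :=
  fderiv ℝ f x (EuclideanSpace.single i 1)

/-- Laplacian -/
def lap (f : V3 → ℝ) (x : V3) : ℝ := ∑ i, pd i (pd i f) x

/-- divergence -/
def div3 (F : V3 → Fin 3 → ℝ) (x : V3) : ℝ := ∑ i, pd i (fun y => F y i) x

/-- curl -/
def curl3 (F : V3 → Fin 3 → ℝ) (x : V3) : Fin 3 → ℝ :=
  ![pd 1 (fun y => F y 2) x - pd 2 (fun y => F y 1) x,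
    pd 2 (fun y => F y 0) x - pd 0 (fun y => F y 2) x,
    pd 0 (fun y => F y 1) x - pd 1 (fun y => F y 0) x]

/-- gradient -/
def grad3 (f : V3 → ℝ) (x : V3) : Fin 3 → ℝ := fun i => pd i f x

/-- cross product -/
def cross3 (u v : Fin 3 → ℝ) : Fin 3 → ℝ :=
  ![u 1 * v 2 - u 2 * v 1, u 2 * v 0 - u 0 * v 2, u 0 * v 1 - u 1 * v 0]

lemma hd_cos (c s : ℝ) : HasDerivAt (fun u => Real.cos (c*u)) (-(c * Real.sin (c*s))) s := by
  have := (Real.hasDerivAt_cos (c*s)).comp s ((hasDerivAt_id s).const_mul c)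
  simpa [mul_comm, Function.comp_def] using this

lemma hd_sin (c s : ℝ) : HasDerivAt (fun u => Real.sin (c*u)) (c * Real.cos (c*s)) s := by
  have := (Real.hasDerivAt_sin (c*s)).comp s ((hasDerivAt_id s).const_mul c)
  simpa [mul_comm, Function.comp_def] using this

lemma hproj (j : Fin 3) (x : V3) :
    HasFDerivAt (fun y : V3 => y j) (EuclideanSpace.proj j : V3 →L[ℝ] ℝ) x := by
  have := (EuclideanSpace.proj j : V3 →L[ℝ] ℝ).hasFDerivAt (x := x)
  exact this.congr_of_eventuallyEq (by filter_upwards with y; rfl)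

lemma pd_mul3 {a b c a' b' c' : ℝ → ℝ}
    (ha : ∀ s, HasDerivAt a (a' s) s) (hb : ∀ s, HasDerivAt b (b' s) s)
    (hc : ∀ s, HasDerivAt c (c' s) s) (i : Fin 3) (x : V3) :
    pd i (fun y : V3 => a (y 0) * b (y 1) * c (y 2)) x =
      ![a' (x 0) * b (x 1) * c (x 2),
        a (x 0) * b' (x 1) * c (x 2),
        a (x 0) * b (x 1) * c' (x 2)] i := by
  have h0 : HasFDerivAt (fun y : V3 => a (y 0))
      (a' (x 0) • (EuclideanSpace.proj (0:Fin 3) : V3 →L[ℝ] ℝ)) x :=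
    (ha (x 0)).comp_hasFDerivAt x (hproj 0 x)
  have h1 : HasFDerivAt (fun y : V3 => b (y 1))
      (b' (x 1) • (EuclideanSpace.proj (1:Fin 3) : V3 →L[ℝ] ℝ)) x :=
    (hb (x 1)).comp_hasFDerivAt x (hproj 1 x)
  have h2 : HasFDerivAt (fun y : V3 => c (y 2))
      (c' (x 2) • (EuclideanSpace.proj (2:Fin 3) : V3 →L[ℝ] ℝ)) x :=
    (hc (x 2)).comp_hasFDerivAt x (hproj 2 x)
  have H := (h0.mul h1).mul h2
  unfold pd
  rw [show (fun y : V3 => a (y 0) * b (y 1) * c (y 2)) = ((fun y : V3 => a (y 0)) * (fun y : V3 => b (y 1))) * (fun y : V3 => c (y 2)) from rfl, H.fderiv]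
  fin_cases i <;>
    simp [ContinuousLinearMap.add_apply, ContinuousLinearMap.smul_apply,
      PiLp.proj_apply, EuclideanSpace.single_apply] <;> ring

lemma pd_const (j : Fin 3) (x : V3) (k : ℝ) : pd j (fun _ : V3 => k) x = 0 := by
  simp [pd]

/-- the standing-wave fields of Problem 1 solve the rescaled
source-free Maxwell equations. -/
theorem stmt10 (ε ω : ℝ) (hε : 0 < ε) (hω : ω = Real.sqrt 6 * Real.pi / ε)
    (E0 : V3 → Fin 3 → ℝ)
    (hE0 : ∀ x : V3, E0 x =
      ![Real.cos (Real.pi * x 0) * Real.sin (Real.pi * x 1) * Real.sin (-(2 * Real.pi) * x 2),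
        Real.sin (Real.pi * x 0) * Real.cos (Real.pi * x 1) * Real.sin (-(2 * Real.pi) * x 2),
        Real.sin (Real.pi * x 0) * Real.sin (Real.pi * x 1) * Real.cos (-(2 * Real.pi) * x 2)])
    (E B : ℝ → V3 → Fin 3 → ℝ)
    (hE : ∀ t x, E t x = Real.cos (ω * t) • E0 x)
    (hB : ∀ (t : ℝ) (x : V3), B t x = (Real.sqrt (3 / 2) * Real.sin (ω * t)) •
      ![-(Real.sin (Real.pi * x 0) * Real.cos (Real.pi * x 1) * Real.cos (2 * Real.pi * x 2)),
        Real.cos (Real.pi * x 0) * Real.sin (Real.pi * x 1) * Real.cos (2 * Real.pi * x 2),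
        0]) :
    (∀ t x, -(ε • deriv (fun s => E s x) t) + curl3 (B t) x = 0) ∧
    (∀ t x, ε • deriv (fun s => B s x) t + curl3 (E t) x = 0) ∧
    (∀ t x, div3 (E t) x = 0) ∧
    (∀ t x, div3 (B t) x = 0) := by
  have hεω : ε * ω = Real.sqrt 6 * Real.pi := by
    rw [hω]; field_simp
  have hs6 : Real.sqrt 6 * Real.sqrt 6 = 6 := Real.mul_self_sqrt (by norm_num)
  have h32 : Real.sqrt (3 / 2) = Real.sqrt 6 / 2 := by
    rw [show (3/2 : ℝ) = 6 / 4 by norm_num, show (4:ℝ) = 2^2 by norm_num,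
      Real.sqrt_div' , Real.sqrt_sq]
    all_goals norm_num
  -- time derivatives
  have hdE : ∀ t x, deriv (fun s => E s x) t = (-(ω * Real.sin (ω*t))) • E0 x := by
    intro t x
    have h : (fun s => E s x) = fun s => Real.cos (ω*s) • E0 x := funext fun s => hE s x
    rw [h]; exact ((hd_cos ω t).smul_const (E0 x)).deriv
  have hdB : ∀ (t : ℝ) (x : V3), deriv (fun s => B s x) t =
      (Real.sqrt (3 / 2) * (ω * Real.cos (ω*t))) •
      ![-(Real.sin (Real.pi * x 0) * Real.cos (Real.pi * x 1) * Real.cos (2 * Real.pi * x 2)),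
        Real.cos (Real.pi * x 0) * Real.sin (Real.pi * x 1) * Real.cos (2 * Real.pi * x 2),
        0] := by
    intro t x
    have h : (fun s => B s x) = fun s => (Real.sqrt (3 / 2) * Real.sin (ω*s)) •
      ![-(Real.sin (Real.pi * x 0) * Real.cos (Real.pi * x 1) * Real.cos (2 * Real.pi * x 2)),
        Real.cos (Real.pi * x 0) * Real.sin (Real.pi * x 1) * Real.cos (2 * Real.pi * x 2),
        0] := funext fun s => hB s x
    rw [h]
    exact (((hd_sin ω t).const_mul (Real.sqrt (3 / 2))).smul_const _).deriv
  -- spatial component function re-expressions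
  have hE0f : ∀ t : ℝ, (fun y : V3 => E t y 0) = fun y : V3 =>
      (Real.cos (ω*t) * Real.cos (Real.pi * y 0)) * Real.sin (Real.pi * y 1) *
        Real.sin (-(2 * Real.pi) * y 2) := by
    intro t; funext y; rw [hE, hE0]; simp; ring
  have hE1f : ∀ t : ℝ, (fun y : V3 => E t y 1) = fun y : V3 =>
      (Real.cos (ω*t) * Real.sin (Real.pi * y 0)) * Real.cos (Real.pi * y 1) *
        Real.sin (-(2 * Real.pi) * y 2) := by
    intro t; funext y; rw [hE, hE0]; simp; ring
  have hE2f : ∀ t : ℝ, (fun y : V3 => E t y 2) = fun y : V3 =>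
      (Real.cos (ω*t) * Real.sin (Real.pi * y 0)) * Real.sin (Real.pi * y 1) *
        Real.cos (-(2 * Real.pi) * y 2) := by
    intro t; funext y; rw [hE, hE0]; simp; ring
  have hB0f : ∀ t : ℝ, (fun y : V3 => B t y 0) = fun y : V3 =>
      (-(Real.sqrt (3 / 2) * Real.sin (ω*t)) * Real.sin (Real.pi * y 0)) *
        Real.cos (Real.pi * y 1) * Real.cos (2 * Real.pi * y 2) := by
    intro t; funext y; rw [hB]; simp; ring
  have hB1f : ∀ t : ℝ, (fun y : V3 => B t y 1) = fun y : V3 =>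
      ((Real.sqrt (3 / 2) * Real.sin (ω*t)) * Real.cos (Real.pi * y 0)) *
        Real.sin (Real.pi * y 1) * Real.cos (2 * Real.pi * y 2) := by
    intro t; funext y; rw [hB]; simp; ring
  have hB2f : ∀ t : ℝ, (fun y : V3 => B t y 2) = fun _ : V3 => (0:ℝ) := by
    intro t; funext y; rw [hB]; simp
  have hc1 : ∀ t : ℝ, ε * -(ω * Real.sin (ω*t)) =
      -(2*Real.pi*(Real.sqrt (3 / 2) * Real.sin (ω*t))) := by
    intro t; rw [hω, h32]; field_simp
  have hc2 : ∀ t : ℝ, ε * (Real.sqrt (3 / 2) * (ω * Real.cos (ω*t))) =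
      (3*Real.pi) * Real.cos (ω*t) := by
    intro t
    generalize Real.cos (ω*t) = C
    rw [hω, h32]; field_simp
    linear_combination C * hs6
  refine ⟨?_, ?_, ?_, ?_⟩
  · intro t x
    rw [hdE, smul_smul, hc1 t]
    funext i; fin_cases i
    all_goals simp only [curl3, hB0f, hB1f, hB2f]
    all_goals simp only [pd_const,
      pd_mul3 (fun s => (hd_sin Real.pi s).const_mul (-(Real.sqrt (3 / 2) * Real.sin (ω*t))))
        (hd_cos Real.pi) (hd_cos (2 * Real.pi)),
      pd_mul3 (fun s => (hd_cos Real.pi s).const_mul (Real.sqrt (3 / 2) * Real.sin (ω*t)))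
        (hd_sin Real.pi) (hd_cos (2 * Real.pi))]
    all_goals simp [hE0, Real.sin_neg, Real.cos_neg, neg_mul]
    all_goals ring
  · intro t x
    rw [hdB, smul_smul, hc2 t]
    funext i; fin_cases i
    all_goals simp only [curl3, hE0f, hE1f, hE2f]
    all_goals simp only [
      pd_mul3 (fun s => (hd_cos Real.pi s).const_mul (Real.cos (ω*t)))
        (hd_sin Real.pi) (hd_sin (-(2 * Real.pi))),
      pd_mul3 (fun s => (hd_sin Real.pi s).const_mul (Real.cos (ω*t)))
        (hd_cos Real.pi) (hd_sin (-(2 * Real.pi))),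
      pd_mul3 (fun s => (hd_sin Real.pi s).const_mul (Real.cos (ω*t)))
        (hd_sin Real.pi) (hd_cos (-(2 * Real.pi)))]
    all_goals simp [Real.sin_neg, Real.cos_neg, neg_mul]
    all_goals ring
  · intro t x
    simp only [div3, Fin.sum_univ_three, hE0f, hE1f, hE2f]
    simp only [
      pd_mul3 (fun s => (hd_cos Real.pi s).const_mul (Real.cos (ω*t)))
        (hd_sin Real.pi) (hd_sin (-(2 * Real.pi))),
      pd_mul3 (fun s => (hd_sin Real.pi s).const_mul (Real.cos (ω*t)))
        (hd_cos Real.pi) (hd_sin (-(2 * Real.pi))),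
      pd_mul3 (fun s => (hd_sin Real.pi s).const_mul (Real.cos (ω*t)))
        (hd_sin Real.pi) (hd_cos (-(2 * Real.pi)))]
    simp [Real.sin_neg, Real.cos_neg, neg_mul]
    ring
  · intro t x
    simp only [div3, Fin.sum_univ_three, hB0f, hB1f, hB2f]
    simp only [pd_const,
      pd_mul3 (fun s => (hd_sin Real.pi s).const_mul (-(Real.sqrt (3 / 2) * Real.sin (ω*t))))
        (hd_cos Real.pi) (hd_cos (2 * Real.pi)),
      pd_mul3 (fun s => (hd_cos Real.pi s).const_mul (Real.sqrt (3 / 2) * Real.sin (ω*t)))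
        (hd_sin Real.pi) (hd_cos (2 * Real.pi))]
    simp [Real.sin_neg, Real.cos_neg, neg_mul]
    ring
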